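/- Let D = diag(λ₁,…,λ_d) with λ₁ ≥ … ≥ λ_d > 0, let v ∈ ℝ^d and set V = max(d^{-1/2}, ‖v‖_∞). Let A = D + √D v vᵀ √D with eigenvalues ν₁ ≥ … ≥ ν_d and (e₁^{(1)},…,e_d^{(1)}) a corresponding orthonormal basis of eigenvectors. If i,j ∈ {1,…,d} satisfy max(λ_i,λ_j) > (1 + dV²) · min(λ_i,λ_j), then for every ρ ∈ (0,1), |[e_i^{(1)}]_j| ≤ (d−i+1)V² · max(2(1−ρ)^{-1/2}, 2ρ^{-1}(d−i+1)V²) / (1 − (1 + (d−i+1)V²) · min(λ_i,λ_j)/max(λ_i,λ_j)) · √(min(λ_i,λ_j)/max(λ_i,λ_j)). -/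

import Mathlib

open Matrix Finset

/-- The sup norm `‖v‖_∞ = max_j |[v]_j|` of a vector `v ∈ ℝ^d`, `d > 0`. -/
noncomputable def supNorm {d : ℕ} (hd : 0 < d) (v : Fin d → ℝ) : ℝ :=
  Finset.univ.sup' (Finset.univ_nonempty_iff.mpr (Fin.pos_iff_nonempty.mp hd))
    fun j => |v j|



lemma dot_combo {d : ℕ} (e : Fin d → Fin d → ℝ)
    (he : ∀ i j, e i ⬝ᵥ e j = if i = j then (1 : ℝ) else 0)
    (a b : Fin d → ℝ) :
    ∑ j, (∑ m, a m * e m j) * (∑ n, b n * e n j) = ∑ m, a m * b m := by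
  have : ∀ j, (∑ m, a m * e m j) * (∑ n, b n * e n j)
      = ∑ m, ∑ n, a m * b n * (e m j * e n j) := by
    intro j
    rw [Finset.sum_mul_sum]
    congr 1; ext m; congr 1; ext n; ring
  simp only [this]
  rw [Finset.sum_comm]
  have : ∀ m, ∑ j, ∑ n, a m * b n * (e m j * e n j)
      = ∑ n, a m * b n * (e m ⬝ᵥ e n) := by
    intro m
    rw [Finset.sum_comm]
    congr 1; ext n
    simp only [dotProduct]
    rw [Finset.mul_sum]
  simp only [this, he]
  congr 1; ext m
  rw [Finset.sum_eq_single m] <;> simp +contextual [eq_comm]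

lemma mulVec_formula {d : ℕ} (lam v : Fin d → ℝ)
    (A : Matrix (Fin d) (Fin d) ℝ)
    (hA : A = Matrix.diagonal lam +
      (Matrix.diagonal fun i => Real.sqrt (lam i)) * Matrix.vecMulVec v v *
      (Matrix.diagonal fun i => Real.sqrt (lam i)))
    (x : Fin d → ℝ) (j : Fin d) :
    A.mulVec x j = lam j * x j +
      Real.sqrt (lam j) * v j * ∑ k, Real.sqrt (lam k) * v k * x k := by
  subst hA
  simp only [Matrix.mulVec, dotProduct, Matrix.add_apply, Matrix.mul_diagonal,
    Matrix.diagonal_mul, Matrix.vecMulVec_apply, Matrix.diagonal_apply]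
  simp only [add_mul]
  rw [Finset.sum_add_distrib]
  congr 1
  · rw [Finset.sum_eq_single j] <;> simp +contextual [eq_comm]
  · rw [Finset.mul_sum]
    congr 1; ext k; ring

lemma quad_eq {d : ℕ} (lam v : Fin d → ℝ)
    (A : Matrix (Fin d) (Fin d) ℝ)
    (hA : A = Matrix.diagonal lam +
      (Matrix.diagonal fun i => Real.sqrt (lam i)) * Matrix.vecMulVec v v *
      (Matrix.diagonal fun i => Real.sqrt (lam i)))
    (ν : Fin d → ℝ) (e : Fin d → Fin d → ℝ)
    (he_orth : ∀ i j, e i ⬝ᵥ e j = if i = j then (1 : ℝ) else 0)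
    (he_eig : ∀ i, A.mulVec (e i) = ν i • e i)
    (a : Fin d → ℝ) :
    (∑ j, lam j * (∑ m, a m * e m j) ^ 2) +
      (∑ k, Real.sqrt (lam k) * v k * (∑ m, a m * e m k)) ^ 2
    = ∑ m, ν m * a m ^ 2 := by
  set x : Fin d → ℝ := fun j => ∑ m, a m * e m j with hx
  have hAx : ∀ j, A.mulVec x j = ∑ m, (ν m * a m) * e m j := by
    intro j
    have : A.mulVec x j = ∑ m, a m * (A.mulVec (e m) j) := by
      simp only [Matrix.mulVec, dotProduct, hx]
      simp only [Finset.mul_sum]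
      rw [Finset.sum_comm]
      congr 1; ext m
      congr 1; ext k; ring
    rw [this]
    congr 1; ext m
    rw [he_eig m]
    simp [Pi.smul_apply]
    ring
  have way2 : ∑ j, x j * A.mulVec x j = ∑ m, a m * (ν m * a m) := by
    calc ∑ j, x j * A.mulVec x j = ∑ j, (∑ m, a m * e m j) * (∑ n, (ν n * a n) * e n j) := by
          congr 1; ext j; rw [hAx j]
      _ = ∑ m, a m * (ν m * a m) := dot_combo e he_orth a _
  have way1 : ∑ j, x j * A.mulVec x j
      = (∑ j, lam j * x j ^ 2) + (∑ k, Real.sqrt (lam k) * v k * x k) ^ 2 := by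
    have : ∀ j, x j * A.mulVec x j
        = lam j * x j ^ 2 + (Real.sqrt (lam j) * v j * x j) * (∑ k, Real.sqrt (lam k) * v k * x k) := by
      intro j
      rw [mulVec_formula lam v A hA x j]
      ring
    simp only [this]
    rw [Finset.sum_add_distrib]
    congr 1
    rw [← Finset.sum_mul, sq]
  rw [way1] at way2
  rw [way2]
  congr 1; ext m; ring

lemma exists_ne_zero_map_zero {d : ℕ} (i0 : Fin d)
    (L : (Fin d → ℝ) →ₗ[ℝ] (Fin d → ℝ)) (h : ∀ a, L a i0 = 0) :
    ∃ a, a ≠ 0 ∧ L a = 0 := by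
  by_contra hc
  push_neg at hc
  have hinj : Function.Injective L := by
    rw [← LinearMap.ker_eq_bot, Submodule.eq_bot_iff]
    intro a ha
    by_contra h0
    exact hc a h0 ha
  have hle : LinearMap.range L ≤ LinearMap.ker (LinearMap.proj i0 : (Fin d → ℝ) →ₗ[ℝ] ℝ) := by
    rintro x ⟨a, rfl⟩
    simpa using h a
  have h1 : Module.finrank ℝ (LinearMap.range L) = d := by
    rw [LinearMap.finrank_range_of_inj hinj, Module.finrank_fintype_fun_eq_card]
    simp
  have h2 : LinearMap.ker (LinearMap.proj i0 : (Fin d → ℝ) →ₗ[ℝ] ℝ) < ⊤ := by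
    rw [lt_top_iff_ne_top]
    intro htop
    have : (Pi.single i0 1 : Fin d → ℝ) ∈ LinearMap.ker (LinearMap.proj i0 : (Fin d → ℝ) →ₗ[ℝ] ℝ) := by
      rw [htop]; trivial
    simp [LinearMap.mem_ker] at this
  have h3 := Submodule.finrank_lt (K := ℝ) (V := Fin d → ℝ) h2.ne
  have h4 := Submodule.finrank_mono hle
  rw [h1, Module.finrank_fintype_fun_eq_card] at *
  simp at h3 h4
  omega

section Spectral
variable {d : ℕ} (lam v : Fin d → ℝ) (A : Matrix (Fin d) (Fin d) ℝ)
  (ν : Fin d → ℝ) (e : Fin d → Fin d → ℝ)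

-- quadratic identity hypothesis, provided by quad_eq
variable (hquad : ∀ a : Fin d → ℝ,
    (∑ j, lam j * (∑ m, a m * e m j) ^ 2) +
      (∑ k, Real.sqrt (lam k) * v k * (∑ m, a m * e m k)) ^ 2
    = ∑ m, ν m * a m ^ 2)
  (hnorm : ∀ a : Fin d → ℝ,
    (∑ j, (∑ m, a m * e m j) ^ 2) = ∑ m, a m ^ 2)

include hquad hnorm

lemma nu_ge (hlam_anti : Antitone lam) (hν_anti : Antitone ν) (i : Fin d) :
    lam i ≤ ν i := by
  set L : (Fin d → ℝ) →ₗ[ℝ] (Fin d → ℝ) :=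
    { toFun := fun a j => if j < i then a j else if i < j then ∑ m, a m * e m j else 0
      map_add' := by
        intro a b; funext j
        by_cases h1 : j < i <;> by_cases h2 : i < j <;>
          simp [h1, h2, add_mul, Finset.sum_add_distrib]
      map_smul' := by
        intro c a; funext j
        by_cases h1 : j < i <;> by_cases h2 : i < j <;>
          simp [h1, h2, Finset.mul_sum, mul_assoc] } with hL
  obtain ⟨a, ha0, haL⟩ := exists_ne_zero_map_zero i L (by intro a; simp [hL])
  have ha_lt : ∀ m, m < i → a m = 0 := by
    intro m hm
    have := congrFun haL m
    simpa [hL, hm] using this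
  have hx0 : ∀ j, i < j → (∑ m, a m * e m j) = 0 := by
    intro j hj
    have := congrFun haL j
    simpa [hL, hj, asymm hj] using this
  have hpos : 0 < ∑ m, a m ^ 2 := by
    obtain ⟨m, hm⟩ := Function.ne_iff.mp ha0
    exact Finset.sum_pos' (fun k _ => sq_nonneg _)
      ⟨m, Finset.mem_univ m, by
        have hm' : a m ≠ 0 := by simpa using hm
        positivity⟩
  have key : lam i * ∑ m, a m ^ 2 ≤ ν i * ∑ m, a m ^ 2 := by
    calc lam i * ∑ m, a m ^ 2 = ∑ j, lam i * (∑ m, a m * e m j) ^ 2 := by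
          rw [← hnorm a, Finset.mul_sum]
      _ ≤ ∑ j, lam j * (∑ m, a m * e m j) ^ 2 := by
          apply Finset.sum_le_sum
          intro j _
          rcases lt_or_ge i j with hj | hj
          · rw [hx0 j hj]; simp
          · exact mul_le_mul_of_nonneg_right (hlam_anti hj) (sq_nonneg _)
      _ ≤ (∑ j, lam j * (∑ m, a m * e m j) ^ 2) +
            (∑ k, Real.sqrt (lam k) * v k * (∑ m, a m * e m k)) ^ 2 :=
          le_add_of_nonneg_right (sq_nonneg _)
      _ = ∑ m, ν m * a m ^ 2 := hquad a
      _ ≤ ∑ m, ν i * a m ^ 2 := by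
          apply Finset.sum_le_sum
          intro m _
          rcases lt_or_ge m i with hm | hm
          · rw [ha_lt m hm]; simp
          · exact mul_le_mul_of_nonneg_right (hν_anti hm) (sq_nonneg _)
      _ = ν i * ∑ m, a m ^ 2 := by rw [Finset.mul_sum]
  exact le_of_mul_le_mul_right (by linarith) hpos

lemma nu_le (hlam_anti : Antitone lam) (hlam_pos : ∀ i, 0 < lam i)
    (hν_anti : Antitone ν) (i : Fin d) :
    ν i ≤ lam i + ∑ k ∈ Finset.univ.filter (fun k => i ≤ k), lam k * v k ^ 2 := by
  set L : (Fin d → ℝ) →ₗ[ℝ] (Fin d → ℝ) :=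
    { toFun := fun a j => if i < j then a j else if j < i then ∑ m, a m * e m j else 0
      map_add' := by
        intro a b; funext j
        by_cases h1 : i < j <;> by_cases h2 : j < i <;>
          simp [h1, h2, add_mul, Finset.sum_add_distrib]
      map_smul' := by
        intro c a; funext j
        by_cases h1 : i < j <;> by_cases h2 : j < i <;>
          simp [h1, h2, Finset.mul_sum, mul_assoc] } with hL
  obtain ⟨a, ha0, haL⟩ := exists_ne_zero_map_zero i L (by intro a; simp [hL])
  have ha_gt : ∀ m, i < m → a m = 0 := by
    intro m hm
    have := congrFun haL m
    simpa [hL, hm] using this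
  have hx0 : ∀ j, j < i → (∑ m, a m * e m j) = 0 := by
    intro j hj
    have := congrFun haL j
    simpa [hL, hj, asymm hj] using this
  have hpos : 0 < ∑ m, a m ^ 2 := by
    obtain ⟨m, hm⟩ := Function.ne_iff.mp ha0
    exact Finset.sum_pos' (fun k _ => sq_nonneg _)
      ⟨m, Finset.mem_univ m, by
        have hm' : a m ≠ 0 := by simpa using hm
        positivity⟩
  set Sg : ℝ := ∑ k ∈ Finset.univ.filter (fun k => i ≤ k), lam k * v k ^ 2 with hSg
  have hCsq : (∑ k, Real.sqrt (lam k) * v k * (∑ m, a m * e m k)) ^ 2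
      ≤ Sg * ∑ m, a m ^ 2 := by
    have hres : (∑ k, Real.sqrt (lam k) * v k * (∑ m, a m * e m k))
        = ∑ k ∈ Finset.univ.filter (fun k => i ≤ k),
            Real.sqrt (lam k) * v k * (∑ m, a m * e m k) := by
      symm
      apply Finset.sum_subset (Finset.filter_subset _ _)
      intro k _ hk
      simp only [Finset.mem_filter, Finset.mem_univ, true_and, not_le] at hk
      rw [hx0 k hk, mul_zero]
    rw [hres]
    calc (∑ k ∈ Finset.univ.filter (fun k => i ≤ k),
            Real.sqrt (lam k) * v k * (∑ m, a m * e m k)) ^ 2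
        ≤ (∑ k ∈ Finset.univ.filter (fun k => i ≤ k), (Real.sqrt (lam k) * v k) ^ 2) *
          (∑ k ∈ Finset.univ.filter (fun k => i ≤ k), (∑ m, a m * e m k) ^ 2) :=
          Finset.sum_mul_sq_le_sq_mul_sq _ _ _
      _ ≤ Sg * ∑ m, a m ^ 2 := by
          apply mul_le_mul
          · apply le_of_eq
            apply Finset.sum_congr rfl
            intro k _
            rw [mul_pow, Real.sq_sqrt (hlam_pos k).le]
          · rw [← hnorm a]
            exact Finset.sum_le_sum_of_subset_of_nonneg (Finset.filter_subset _ _)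
              (fun k _ _ => sq_nonneg _)
          · exact Finset.sum_nonneg fun k _ => sq_nonneg _
          · rw [hSg]
            exact Finset.sum_nonneg fun k _ => mul_nonneg (hlam_pos k).le (sq_nonneg _)
  have key : ν i * ∑ m, a m ^ 2 ≤ (lam i + Sg) * ∑ m, a m ^ 2 := by
    calc ν i * ∑ m, a m ^ 2 = ∑ m, ν i * a m ^ 2 := by rw [Finset.mul_sum]
      _ ≤ ∑ m, ν m * a m ^ 2 := by
          apply Finset.sum_le_sum
          intro m _
          rcases lt_or_ge i m with hm | hm
          · rw [ha_gt m hm]; simp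
          · exact mul_le_mul_of_nonneg_right (hν_anti hm) (sq_nonneg _)
      _ = (∑ j, lam j * (∑ m, a m * e m j) ^ 2) +
            (∑ k, Real.sqrt (lam k) * v k * (∑ m, a m * e m k)) ^ 2 := (hquad a).symm
      _ ≤ lam i * (∑ m, a m ^ 2) + Sg * ∑ m, a m ^ 2 := by
          apply add_le_add _ hCsq
          rw [← hnorm a, Finset.mul_sum]
          apply Finset.sum_le_sum
          intro j _
          rcases lt_or_ge j i with hj | hj
          · rw [hx0 j hj]; simp
          · exact mul_le_mul_of_nonneg_right (hlam_anti hj) (sq_nonneg _)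
      _ = (lam i + Sg) * ∑ m, a m ^ 2 := by ring
  exact le_of_mul_le_mul_right (by linarith) hpos

lemma nu_interlace (hlam_anti : Antitone lam) (hν_anti : Antitone ν)
    (k0 i : Fin d) (hk0 : k0 < i) : ν i ≤ lam k0 := by
  set L : (Fin d → ℝ) →ₗ[ℝ] (Fin d → ℝ) :=
    { toFun := fun a j =>
        if i < j then a j else if j < k0 then ∑ m, a m * e m j
        else if j = k0 then ∑ t, Real.sqrt (lam t) * v t * (∑ m, a m * e m t) else 0
      map_add' := by
        intro a b; funext j
        by_cases h1 : i < j <;> by_cases h2 : j < k0 <;> by_cases h3 : j = k0 <;>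
          simp [h1, h2, h3, asymm hk0, add_mul, mul_add, Finset.sum_add_distrib]
      map_smul' := by
        intro c a; funext j
        by_cases h1 : i < j <;> by_cases h2 : j < k0 <;> by_cases h3 : j = k0 <;>
          simp [h1, h2, h3, asymm hk0, Finset.mul_sum, mul_assoc, mul_left_comm] } with hL
  obtain ⟨a, ha0, haL⟩ := exists_ne_zero_map_zero i L (by
    intro a
    simp [hL, asymm hk0, hk0.ne'])
  have ha_gt : ∀ m, i < m → a m = 0 := by
    intro m hm
    have := congrFun haL m
    simpa [hL, hm] using this
  have hx0 : ∀ j, j < k0 → (∑ m, a m * e m j) = 0 := by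
    intro j hj
    have := congrFun haL j
    simpa [hL, hj, asymm (hj.trans hk0)] using this
  have hC0 : (∑ t, Real.sqrt (lam t) * v t * (∑ m, a m * e m t)) = 0 := by
    have := congrFun haL k0
    simpa [hL, asymm hk0] using this
  have hpos : 0 < ∑ m, a m ^ 2 := by
    obtain ⟨m, hm⟩ := Function.ne_iff.mp ha0
    exact Finset.sum_pos' (fun k _ => sq_nonneg _)
      ⟨m, Finset.mem_univ m, by
        have hm' : a m ≠ 0 := by simpa using hm
        positivity⟩
  have key : ν i * ∑ m, a m ^ 2 ≤ lam k0 * ∑ m, a m ^ 2 := by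
    calc ν i * ∑ m, a m ^ 2 = ∑ m, ν i * a m ^ 2 := by rw [Finset.mul_sum]
      _ ≤ ∑ m, ν m * a m ^ 2 := by
          apply Finset.sum_le_sum
          intro m _
          rcases lt_or_ge i m with hm | hm
          · rw [ha_gt m hm]; simp
          · exact mul_le_mul_of_nonneg_right (hν_anti hm) (sq_nonneg _)
      _ = (∑ j, lam j * (∑ m, a m * e m j) ^ 2) +
            (∑ k, Real.sqrt (lam k) * v k * (∑ m, a m * e m k)) ^ 2 := (hquad a).symm
      _ = ∑ j, lam j * (∑ m, a m * e m j) ^ 2 := by rw [hC0]; ring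
      _ ≤ ∑ j, lam k0 * (∑ m, a m * e m j) ^ 2 := by
          apply Finset.sum_le_sum
          intro j _
          rcases lt_or_ge j k0 with hj | hj
          · rw [hx0 j hj]; simp
          · exact mul_le_mul_of_nonneg_right (hlam_anti hj) (sq_nonneg _)
      _ = lam k0 * ∑ m, a m ^ 2 := by rw [← Finset.mul_sum, hnorm a]
  exact le_of_mul_le_mul_right key hpos

end Spectral

set_option maxHeartbeats 1000000 in
/-- Intermediate eigenvector bound (Eq. (8) of the paper) for a rank-one perturbation,
valid when `max(λᵢ,λⱼ) > (1 + dV²)·min(λᵢ,λⱼ)`.  Indices are 0-based, so the count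
`d - i + 1` of the paper (1-based `i`) becomes `d - i`. -/
theorem eigenvector_bound_rank_one_separated
    {d : ℕ} (hd : 0 < d)
    (lam : Fin d → ℝ) (hlam_anti : Antitone lam) (hlam_pos : ∀ i, 0 < lam i)
    (v : Fin d → ℝ)
    (V : ℝ) (hV : V = max (1 / Real.sqrt d) (supNorm hd v))
    (A : Matrix (Fin d) (Fin d) ℝ)
    (hA : A = Matrix.diagonal lam +
      (Matrix.diagonal fun i => Real.sqrt (lam i)) * Matrix.vecMulVec v v *
      (Matrix.diagonal fun i => Real.sqrt (lam i)))
    (ν : Fin d → ℝ) (hν_anti : Antitone ν)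
    (e : Fin d → Fin d → ℝ)
    (he_orth : ∀ i j, e i ⬝ᵥ e j = if i = j then (1 : ℝ) else 0)
    (he_eig : ∀ i, A.mulVec (e i) = ν i • e i) :
    ∀ i j : Fin d,
      max (lam i) (lam j) > (1 + (d : ℝ) * V ^ 2) * min (lam i) (lam j) →
      ∀ ρ : ℝ, 0 < ρ → ρ < 1 →
      |e i j| ≤ ((d : ℝ) - (i : ℕ)) * V ^ 2 *
          (max (2 * (Real.sqrt (1 - ρ))⁻¹) (2 * ρ⁻¹ * ((d : ℝ) - (i : ℕ)) * V ^ 2)) /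
          (1 - (1 + ((d : ℝ) - (i : ℕ)) * V ^ 2) *
            (min (lam i) (lam j) / max (lam i) (lam j))) *
        Real.sqrt (min (lam i) (lam j) / max (lam i) (lam j)) := by
  intro i j hsep ρ hρ0 hρ1
  have hd' : (0:ℝ) < d := by exact_mod_cast hd
  have hVpos : 0 < V := by
    have h1 : (0:ℝ) < 1 / Real.sqrt d := by positivity
    rw [hV]; exact lt_of_lt_of_le h1 (le_max_left _ _)
  have hvk : ∀ k, |v k| ≤ V := by
    intro k
    rw [hV]
    refine le_trans ?_ (le_max_right _ _)
    unfold supNorm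
    exact Finset.le_sup' (fun j => |v j|) (Finset.mem_univ k)
  have hnorm : ∀ a : Fin d → ℝ, (∑ j, (∑ m, a m * e m j) ^ 2) = ∑ m, a m ^ 2 := by
    intro a
    simpa [pow_two] using dot_combo e he_orth a a
  have hquad := quad_eq lam v A hA ν e he_orth he_eig
  -- abbreviations matching the goal
  set K : ℝ := ((d : ℝ) - (i : ℕ)) * V ^ 2 with hK
  set M : ℝ := max (2 * (Real.sqrt (1 - ρ))⁻¹) (2 * ρ⁻¹ * ((d : ℝ) - (i : ℕ)) * V ^ 2) with hM
  set n : ℝ := min (lam i) (lam j) with hn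
  set m : ℝ := max (lam i) (lam j) with hm
  set r : ℝ := n / m with hr
  set Δ : ℝ := 1 - (1 + K) * r with hΔ
  have hm_pos : 0 < m := lt_max_of_lt_left (hlam_pos i)
  have hn_pos : 0 < n := lt_min (hlam_pos i) (hlam_pos j)
  have hnm : n ≤ m := min_le_max
  have hr_pos : 0 < r := div_pos hn_pos hm_pos
  have hr_le : r ≤ 1 := div_le_one_of_le₀ hnm hm_pos.le
  have hdi1 : (1:ℝ) ≤ (d : ℝ) - (i : ℕ) := by
    have h := i.isLt
    have : ((i : ℕ) : ℝ) + 1 ≤ d := by exact_mod_cast h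
    linarith
  have hK_pos : 0 < K := by
    rw [hK]; exact mul_pos (by linarith) (by positivity)
  have hKV : V ^ 2 ≤ K := by rw [hK]; nlinarith [sq_nonneg V]
  have hKd : K ≤ (d : ℝ) * V ^ 2 := by
    rw [hK]
    have : ((i : ℕ) : ℝ) ≥ 0 := Nat.cast_nonneg _
    nlinarith [sq_nonneg V]
  have hrlt : (1 + K) * r < 1 := by
    rw [hr]
    rw [show (1 + K) * (n / m) = ((1 + K) * n) / m by ring]
    rw [div_lt_one hm_pos]
    calc (1 + K) * n ≤ (1 + (d : ℝ) * V ^ 2) * n := by nlinarith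
      _ < m := hsep
  have hΔpos : 0 < Δ := by rw [hΔ]; linarith
  have hM1 : 1 ≤ M := by
    have h1 : Real.sqrt (1 - ρ) ≤ 1 := Real.sqrt_le_one.mpr (by linarith)
    have h2 : 0 < Real.sqrt (1 - ρ) := Real.sqrt_pos.mpr (by linarith)
    have h3 : 1 ≤ (Real.sqrt (1 - ρ))⁻¹ := one_le_inv_iff₀.mpr ⟨h2, h1⟩
    rw [hM]
    exact le_trans (by linarith) (le_max_left _ _)
  -- spectral bounds
  have hnu_ge : lam i ≤ ν i := nu_ge lam v ν e hquad hnorm hlam_anti hν_anti i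
  have hnu_le0 := nu_le lam v ν e hquad hnorm hlam_anti hlam_pos hν_anti i
  have hint : ∀ k, k < i → ν i ≤ lam k :=
    fun k hk => nu_interlace lam v ν e hquad hnorm hlam_anti hν_anti k i hk
  -- the tail sum bound
  have hSg_le : ∑ k ∈ Finset.univ.filter (fun k => i ≤ k), lam k * v k ^ 2 ≤ lam i * K := by
    have hcard : (Finset.univ.filter (fun k => i ≤ k)).card = d - (i : ℕ) := by
      have hset : Finset.univ.filter (fun k => i ≤ k) = Finset.Ici i := by
        ext k; simp
      rw [hset, Fin.card_Ici]
    calc ∑ k ∈ Finset.univ.filter (fun k => i ≤ k), lam k * v k ^ 2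
        ≤ ∑ _k ∈ Finset.univ.filter (fun k => i ≤ k), lam i * V ^ 2 := by
          apply Finset.sum_le_sum
          intro k hk
          have hik : i ≤ k := by simpa using hk
          have h1 : lam k ≤ lam i := hlam_anti hik
          have h2 : v k ^ 2 ≤ V ^ 2 := by
            have := hvk k
            nlinarith [abs_nonneg (v k), sq_abs (v k)]
          exact mul_le_mul h1 h2 (sq_nonneg _) (hlam_pos i).le
      _ = ((d - (i : ℕ) : ℕ) : ℝ) * (lam i * V ^ 2) := by
          rw [Finset.sum_const, hcard, nsmul_eq_mul]
      _ = lam i * K := by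
          rw [Nat.cast_sub i.isLt.le, hK]; ring
  have hnu_le : ν i ≤ lam i * (1 + K) := by
    calc ν i ≤ lam i + ∑ k ∈ Finset.univ.filter (fun k => i ≤ k), lam k * v k ^ 2 := hnu_le0
      _ ≤ lam i + lam i * K := by linarith
      _ = lam i * (1 + K) := by ring
  -- coordinate equation
  set c : ℝ := ∑ k, Real.sqrt (lam k) * v k * e i k with hc_def
  have Ee : ∀ j' : Fin d, (ν i - lam j') * e i j' = Real.sqrt (lam j') * v j' * c := by
    intro j'
    have h1 := congrFun (he_eig i) j'
    rw [mulVec_formula lam v A hA] at h1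
    simp only [Pi.smul_apply, smul_eq_mul] at h1
    rw [hc_def]
    linear_combination -h1
  -- bound on |c|
  have hcb : |c| ≤ Real.sqrt (lam i * K) := by
    by_cases hc0 : c = 0
    · rw [hc0]; simp [Real.sqrt_nonneg]
    · have hs_pos : ∀ k, 0 < Real.sqrt (lam k) := fun k => Real.sqrt_pos.mpr (hlam_pos k)
      have h_each : ∀ k, ∃ β : ℝ, 0 ≤ β ∧
          (k < i → Real.sqrt (lam k) * v k * e i k = -(β * c)) := by
        intro k
        by_cases hki : k < i
        · by_cases hνk : ν i = lam k
          · refine ⟨0, le_refl 0, fun _ => ?_⟩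
            have h0 := Ee k
            rw [hνk, sub_self, zero_mul] at h0
            have hv0 : v k = 0 := by
              rcases mul_eq_zero.mp h0.symm with h | h
              · rcases mul_eq_zero.mp h with h' | h'
                · exact absurd h' (ne_of_gt (hs_pos k))
                · exact h'
              · exact absurd h hc0
            rw [hv0]; ring
          · have hlt : ν i < lam k := lt_of_le_of_ne (hint k hki) hνk
            have hgap : 0 < lam k - ν i := by linarith
            refine ⟨lam k * v k ^ 2 / (lam k - ν i), div_nonneg (mul_nonneg (hlam_pos k).le (sq_nonneg _)) hgap.le, fun _ => ?_⟩
            have h0 := Ee k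
            have hne : ν i - lam k ≠ 0 := by intro h; apply hνk; linarith [sub_eq_zero.mp h]
            have hne2 : lam k - ν i ≠ 0 := ne_of_gt hgap
            have hsq : Real.sqrt (lam k) ^ 2 = lam k := Real.sq_sqrt (hlam_pos k).le
            rw [show -(lam k * v k ^ 2 / (lam k - ν i) * c)
                = (-(lam k * v k ^ 2 * c)) / (lam k - ν i) by ring]
            rw [eq_div_iff hne2]
            linear_combination (-(Real.sqrt (lam k) * v k)) * h0 - (v k ^ 2 * c) * hsq
        · exact ⟨0, le_refl 0, fun h => absurd h hki⟩
      choose β hβ0 hβeq using h_each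
      set B : ℝ := ∑ k ∈ Finset.univ.filter (fun k => k < i), β k with hB
      have hB0 : 0 ≤ B := Finset.sum_nonneg fun k _ => hβ0 k
      set T : ℝ := ∑ k ∈ Finset.univ.filter (fun k => ¬ k < i),
        Real.sqrt (lam k) * v k * e i k with hT
      have hfilter_eq : Finset.univ.filter (fun k : Fin d => ¬ k < i)
          = Finset.univ.filter (fun k => i ≤ k) := by
        ext k; simp [not_lt]
      have hsum1 : ∑ k ∈ Finset.univ.filter (fun k => k < i),
          Real.sqrt (lam k) * v k * e i k = -(B * c) := by
        rw [Finset.sum_congr rfl (fun k hk => hβeq k (by simpa using hk)),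
          Finset.sum_neg_distrib, ← Finset.sum_mul, hB]
      have htotal : (∑ k ∈ Finset.univ.filter (fun k => k < i),
          Real.sqrt (lam k) * v k * e i k) + T = c :=
        Finset.sum_filter_add_sum_filter_not Finset.univ (fun k => k < i) _
      have hcB : c * (1 + B) = T := by
        rw [hsum1] at htotal
        linear_combination -htotal
      -- bound |T|
      have hsum_e : ∑ k, (e i k) ^ 2 = 1 := by
        have := he_orth i i
        simpa [dotProduct, pow_two] using this
      have hT2 : T ^ 2 ≤ lam i * K := by
        calc T ^ 2 ≤ (∑ k ∈ Finset.univ.filter (fun k => ¬ k < i),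
              (Real.sqrt (lam k) * v k) ^ 2) *
            (∑ k ∈ Finset.univ.filter (fun k => ¬ k < i), (e i k) ^ 2) := by
              rw [hT]
              exact Finset.sum_mul_sq_le_sq_mul_sq _ _ _
          _ ≤ (lam i * K) * 1 := by
              apply mul_le_mul
              · rw [hfilter_eq]
                refine le_trans (le_of_eq (Finset.sum_congr rfl fun k _ => ?_)) hSg_le
                rw [mul_pow, Real.sq_sqrt (hlam_pos k).le]
              · rw [← hsum_e]
                exact Finset.sum_le_sum_of_subset_of_nonneg (Finset.filter_subset _ _)
                  (fun k _ _ => sq_nonneg _)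
              · exact Finset.sum_nonneg fun k _ => sq_nonneg _
              · exact mul_nonneg (hlam_pos i).le hK_pos.le
          _ = lam i * K := by ring
      have hTabs : |T| ≤ Real.sqrt (lam i * K) := by
        rw [← Real.sqrt_sq_eq_abs]
        exact Real.sqrt_le_sqrt hT2
      calc |c| ≤ |c| * (1 + B) := le_mul_of_one_le_right (abs_nonneg _) (by linarith)
        _ = |c * (1 + B)| := by rw [abs_mul, abs_of_nonneg (by linarith : (0:ℝ) ≤ 1 + B)]
        _ = |T| := by rw [hcB]
        _ ≤ Real.sqrt (lam i * K) := hTabs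
  -- gap bound
  have hgap : m * Δ ≤ |ν i - lam j| := by
    rcases lt_trichotomy (lam i) (lam j) with hlt | heq | hgt
    · -- m = lam j, n = lam i
      have hmm : m = lam j := max_eq_right hlt.le
      have hnn : n = lam i := min_eq_left hlt.le
      have h1 : m * Δ ≤ lam j - ν i := by
        have : m * Δ = m - (1 + K) * n := by
          rw [hΔ, hr]; field_simp
        rw [this, hmm, hnn]
        nlinarith [hnu_le]
      have h2 : 0 < lam j - ν i := lt_of_lt_of_le (mul_pos hm_pos hΔpos) h1
      rw [abs_sub_comm, abs_of_pos h2]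
      exact h1
    · exfalso
      have : m = n := by rw [hm, hn, heq]; simp
      nlinarith
    · -- m = lam i, n = lam j
      have hmm : m = lam i := max_eq_left hgt.le
      have hnn : n = lam j := min_eq_right hgt.le
      have h1 : m * Δ ≤ ν i - lam j := by
        have hh : m * Δ = m - (1 + K) * n := by
          rw [hΔ, hr]; field_simp
        rw [hh, hmm, hnn]
        nlinarith [hnu_ge, hK_pos, hn_pos]
      have h2 : 0 < ν i - lam j := lt_of_lt_of_le (mul_pos hm_pos hΔpos) h1
      rw [abs_of_pos h2]
      exact h1
  -- assemble
  have habs_eq : |e i j| * |ν i - lam j| = Real.sqrt (lam j) * |v j| * |c| := by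
    have := congrArg abs (Ee j)
    rw [abs_mul, abs_mul, abs_mul, abs_of_nonneg (Real.sqrt_nonneg (lam j))] at this
    linarith [this]
  have hnum : Real.sqrt (lam j) * |v j| * |c| ≤ V * (m * Real.sqrt r * Real.sqrt K) := by
    have h1 : Real.sqrt (lam j) * |c| ≤ Real.sqrt (lam j) * Real.sqrt (lam i * K) :=
      mul_le_mul_of_nonneg_left hcb (Real.sqrt_nonneg _)
    have h2 : Real.sqrt (lam j) * Real.sqrt (lam i * K) = m * Real.sqrt r * Real.sqrt K := by
      rw [← Real.sqrt_mul (hlam_pos j).le]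
      have hmn : n * m = lam i * lam j := min_mul_max _ _
      have hmr : m * r = n := by rw [hr]; field_simp
      have hprod : lam j * (lam i * K) = (m * m * r) * K := by
        rw [show m * m * r = m * (m * r) by ring, hmr]
        linear_combination (-K) * hmn
      rw [hprod, Real.sqrt_mul (by positivity), Real.sqrt_mul (by positivity),
        Real.sqrt_mul_self hm_pos.le]
    calc Real.sqrt (lam j) * |v j| * |c| ≤ Real.sqrt (lam j) * V * |c| :=
          mul_le_mul_of_nonneg_right
            (mul_le_mul_of_nonneg_left (hvk j) (Real.sqrt_nonneg _)) (abs_nonneg c)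
      _ = V * (Real.sqrt (lam j) * |c|) := by ring
      _ ≤ V * (m * Real.sqrt r * Real.sqrt K) := by
          rw [← h2]; exact mul_le_mul_of_nonneg_left h1 hVpos.le
  have hVK : V * Real.sqrt K ≤ K * M := by
    have h1 : V ≤ Real.sqrt K := by
      rw [show V = Real.sqrt (V ^ 2) by rw [Real.sqrt_sq hVpos.le]]
      exact Real.sqrt_le_sqrt hKV
    calc V * Real.sqrt K ≤ Real.sqrt K * Real.sqrt K :=
          mul_le_mul_of_nonneg_right h1 (Real.sqrt_nonneg _)
      _ = K := Real.mul_self_sqrt hK_pos.le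
      _ ≤ K * M := le_mul_of_one_le_right hK_pos.le hM1
  have hfinal : |e i j| * (m * Δ) ≤ (K * M / Δ * Real.sqrt r) * (m * Δ) := by
    calc |e i j| * (m * Δ) ≤ |e i j| * |ν i - lam j| :=
          mul_le_mul_of_nonneg_left hgap (abs_nonneg _)
      _ = Real.sqrt (lam j) * |v j| * |c| := habs_eq
      _ ≤ V * (m * Real.sqrt r * Real.sqrt K) := hnum
      _ = (V * Real.sqrt K) * (m * Real.sqrt r) := by ring
      _ ≤ (K * M) * (m * Real.sqrt r) := by
          apply mul_le_mul_of_nonneg_right hVK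
          positivity
      _ = (K * M / Δ * Real.sqrt r) * (m * Δ) := by
          field_simp
  exact le_of_mul_le_mul_right hfinal (mul_pos hm_pos hΔpos)
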